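/- Let n ≥ 1, μ > 2, let δ > 0 be the unique positive root of μ log(1+δ) = 2δ, and let δ₁ ∈ (0, min{μ/2 - 1, δ}]. For ξ with 0 < |ξ| ≤ δ₁ write r := |ξ|, h(r) := μ² log²(1+r) - 4r², λ±(r) := (-μ log(1+r) ± √(h(r)))/2, and define ν(t,ξ) := (e^{λ₊(r)t} - e^{λ₋(r)t})/√(h(r)). Then there exist constants C₁ > 0, C₂ > 0 and t₀ > 0, depending on n and μ, such that for all t ≥ t₀: C₁ t^{2-n} ≤ ∫_{|ξ| ≤ δ₁} |ν(t,ξ)|² dξ ≤ C₂ t^{2-n}. -/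

import Mathlib

open MeasureTheory

private noncomputable def nuF (μ r t : ℝ) : ℝ :=
  (Real.exp ((-(μ * Real.log (1 + r)) + Real.sqrt (μ ^ 2 * Real.log (1 + r) ^ 2 - 4 * r ^ 2)) / 2 * t)
    - Real.exp ((-(μ * Real.log (1 + r)) - Real.sqrt (μ ^ 2 * Real.log (1 + r) ^ 2 - 4 * r ^ 2)) / 2 * t))
    / Real.sqrt (μ ^ 2 * Real.log (1 + r) ^ 2 - 4 * r ^ 2)

private lemma aux_log_lower {μ δ₁ r : ℝ} (hμ : 2 < μ) (hle : δ₁ ≤ μ / 2 - 1)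
    (h0 : 0 < r) (hr : r ≤ δ₁) : 2 * r < μ * Real.log (1 + r) := by
  have hδ₁0 : 0 ≤ δ₁ := le_trans h0.le hr
  have hmono : StrictMonoOn (fun x : ℝ => μ * Real.log (1 + x) - 2 * x) (Set.Icc 0 δ₁) := by
    apply strictMonoOn_of_deriv_pos (convex_Icc 0 δ₁)
    · apply ContinuousOn.sub
      · apply ContinuousOn.mul continuousOn_const
        apply Real.continuousOn_log.comp (Continuous.continuousOn (by continuity))
        intro x hx
        simp only [Set.mem_Icc] at hx
        simp only [Set.mem_compl_iff, Set.mem_singleton_iff]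
        nlinarith [hx.1]
      · exact (continuous_const.mul continuous_id).continuousOn
    · intro x hx
      rw [interior_Icc, Set.mem_Ioo] at hx
      have hx1 : (0:ℝ) < 1 + x := by linarith [hx.1]
      have l1 : HasDerivAt (fun y : ℝ => 1 + y) 1 x := by
        simpa using (hasDerivAt_id x).const_add (1:ℝ)
      have l2 : HasDerivAt (fun y : ℝ => Real.log (1 + y)) (1 / (1 + x)) x := by
        simpa [one_div] using l1.log hx1.ne'
      have l3 : HasDerivAt (fun y : ℝ => μ * Real.log (1 + y) - 2 * y)
          (μ * (1 / (1 + x)) - 2) x := by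
        simpa [Pi.sub_def] using (l2.const_mul μ).sub ((hasDerivAt_id x).const_mul 2)
      rw [l3.deriv]
      have h2x : 2 * (1 + x) < μ := by linarith [hx.2]
      have : 2 < μ * (1 / (1 + x)) := by
        rw [mul_one_div, lt_div_iff₀ hx1]; linarith
      linarith
  have key := hmono (Set.mem_Icc.mpr ⟨le_refl 0, hδ₁0⟩) (Set.mem_Icc.mpr ⟨h0.le, hr⟩) h0
  norm_num [Real.log_one] at key
  linarith

private lemma aux_facts {μ δ₁ r : ℝ} (hμ : 2 < μ) (hle : δ₁ ≤ μ / 2 - 1)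
    (h0 : 0 < r) (hr : r ≤ δ₁) :
    0 < μ ^ 2 * Real.log (1 + r) ^ 2 - 4 * r ^ 2 ∧
    Real.sqrt (μ ^ 2 * Real.log (1 + r) ^ 2 - 4 * r ^ 2) ≤ μ * Real.log (1 + r) ∧
    Real.log (1 + r) ≤ r ∧ 0 < Real.log (1 + r) := by
  have hL0 : 0 < Real.log (1 + r) := Real.log_pos (by linarith)
  have hLr : Real.log (1 + r) ≤ r := by
    have := Real.log_le_sub_one_of_pos (show (0:ℝ) < 1 + r by linarith)
    linarith
  have h2r := aux_log_lower hμ hle h0 hr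
  have hh : 0 < μ ^ 2 * Real.log (1 + r) ^ 2 - 4 * r ^ 2 := by nlinarith
  refine ⟨hh, ?_, hLr, hL0⟩
  have h1 : μ ^ 2 * Real.log (1 + r) ^ 2 - 4 * r ^ 2 ≤ (μ * Real.log (1 + r)) ^ 2 := by
    nlinarith [sq_nonneg r]
  calc Real.sqrt (μ ^ 2 * Real.log (1 + r) ^ 2 - 4 * r ^ 2)
      ≤ Real.sqrt ((μ * Real.log (1 + r)) ^ 2) := Real.sqrt_le_sqrt h1
    _ = μ * Real.log (1 + r) := Real.sqrt_sq (by positivity)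

private lemma aux_lp_le {μ δ₁ r : ℝ} (hμ : 2 < μ) (hle : δ₁ ≤ μ / 2 - 1)
    (h0 : 0 < r) (hr : r ≤ δ₁) :
    (-(μ * Real.log (1 + r)) + Real.sqrt (μ ^ 2 * Real.log (1 + r) ^ 2 - 4 * r ^ 2)) / 2
      ≤ -(r / μ) := by
  obtain ⟨hh, hSle, hLr, hL0⟩ := aux_facts hμ hle h0 hr
  set L := Real.log (1 + r) with hLdef
  set S := Real.sqrt (μ ^ 2 * L ^ 2 - 4 * r ^ 2) with hSdef
  have hμ0 : (0:ℝ) < μ := by linarith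
  have hS0 : 0 ≤ S := Real.sqrt_nonneg _
  have hS2 : S ^ 2 = μ ^ 2 * L ^ 2 - 4 * r ^ 2 := Real.sq_sqrt hh.le
  have key : (μ * L - S) * (μ * L + S) = 4 * r ^ 2 := by nlinarith [hS2]
  have hLle : μ * L ≤ μ * r := by nlinarith
  have h1 : μ * L + S ≤ 2 * (μ * r) := by nlinarith
  have hMS : 0 ≤ μ * L - S := by linarith
  have h3 : 4 * r ^ 2 ≤ (μ * L - S) * (2 * (μ * r)) := by
    calc 4 * r ^ 2 = (μ * L - S) * (μ * L + S) := key.symm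
      _ ≤ (μ * L - S) * (2 * (μ * r)) := mul_le_mul_of_nonneg_left h1 hMS
  have h4 : 2 * (r / μ) ≤ μ * L - S := by
    have heq : 2 * (r / μ) = (2 * r) / μ := by ring
    rw [heq, div_le_iff₀ hμ0]
    nlinarith [h3, h0, mul_pos h0 h0]
  linarith

private lemma aux_nu_nonneg (μ r t : ℝ) (ht : 0 ≤ t) : 0 ≤ nuF μ r t := by
  unfold nuF
  apply div_nonneg _ (Real.sqrt_nonneg _)
  rw [sub_nonneg]
  apply Real.exp_le_exp.mpr
  have hS := Real.sqrt_nonneg (μ ^ 2 * Real.log (1 + r) ^ 2 - 4 * r ^ 2)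
  nlinarith

private lemma aux_nu_le {μ δ₁ r t : ℝ} (hμ : 2 < μ) (hle : δ₁ ≤ μ / 2 - 1)
    (h0 : 0 ≤ r) (hr : r ≤ δ₁) (ht : 0 ≤ t) :
    nuF μ r t ≤ t * Real.exp (-(r * t) / μ) := by
  rcases h0.eq_or_lt with h0' | h0'
  · subst h0'
    unfold nuF
    norm_num [Real.log_one, Real.sqrt_zero]
    positivity
  · obtain ⟨hh, hSle, hLr, hL0⟩ := aux_facts hμ hle h0' hr
    have hlp := aux_lp_le hμ hle h0' hr
    unfold nuF
    set L := Real.log (1 + r) with hLdef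
    set S := Real.sqrt (μ ^ 2 * L ^ 2 - 4 * r ^ 2) with hSdef
    have hSpos : 0 < S := Real.sqrt_pos.mpr hh
    set a := (-(μ * L) + S) / 2 * t with hadef
    set b := (-(μ * L) - S) / 2 * t with hbdef
    have hab : a - b = S * t := by rw [hadef, hbdef]; ring
    have hexp : Real.exp a - Real.exp b ≤ (a - b) * Real.exp a := by
      have h1 := Real.add_one_le_exp (b - a)
      have h2 : (b - a + 1) * Real.exp a ≤ Real.exp b := by
        calc (b - a + 1) * Real.exp a ≤ Real.exp (b - a) * Real.exp a := by
              nlinarith [Real.exp_pos a]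
          _ = Real.exp b := by rw [← Real.exp_add]; ring_nf
      nlinarith [h2]
    have step : (Real.exp a - Real.exp b) / S ≤ t * Real.exp a := by
      rw [div_le_iff₀ hSpos]
      calc Real.exp a - Real.exp b ≤ (a - b) * Real.exp a := hexp
        _ = t * Real.exp a * S := by rw [hab]; ring
    have hexpa : Real.exp a ≤ Real.exp (-(r * t) / μ) := by
      apply Real.exp_le_exp.mpr
      calc a ≤ -(r / μ) * t := mul_le_mul_of_nonneg_right hlp ht
        _ = -(r * t) / μ := by ring
    calc (Real.exp a - Real.exp b) / S ≤ t * Real.exp a := step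
      _ ≤ t * Real.exp (-(r * t) / μ) := mul_le_mul_of_nonneg_left hexpa ht

private lemma aux_nu_ge {μ δ₁ r t : ℝ} (hμ : 2 < μ) (hle : δ₁ ≤ μ / 2 - 1)
    (h0 : 0 < r) (hr : r ≤ δ₁) (ht : 0 < t) (hrt : r * t ≤ 1) :
    t * Real.exp (-(μ / 2)) ≤ nuF μ r t := by
  obtain ⟨hh, hSle, hLr, hL0⟩ := aux_facts hμ hle h0 hr
  unfold nuF
  set L := Real.log (1 + r) with hLdef
  set S := Real.sqrt (μ ^ 2 * L ^ 2 - 4 * r ^ 2) with hSdef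
  have hSpos : 0 < S := Real.sqrt_pos.mpr hh
  have hμ0 : (0:ℝ) < μ := by linarith
  set x := S * t / 2 with hxdef
  have hx0 : 0 < x := by positivity
  have hnum : Real.exp ((-(μ * L) + S) / 2 * t) - Real.exp ((-(μ * L) - S) / 2 * t)
      = Real.exp (-(μ * L * t) / 2) * (Real.exp x - Real.exp (-x)) := by
    have e1 : (-(μ * L) + S) / 2 * t = -(μ * L * t) / 2 + S * t / 2 := by ring
    have e2 : (-(μ * L) - S) / 2 * t = -(μ * L * t) / 2 + -(S * t / 2) := by ring
    rw [hxdef, e1, e2, Real.exp_add, Real.exp_add]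
    ring
  have hsinh : 2 * x ≤ Real.exp x - Real.exp (-x) := by
    have h1 : x ≤ Real.sinh x := Real.self_le_sinh_iff.mpr hx0.le
    rw [Real.sinh_eq] at h1; linarith
  have hfac : Real.exp (-(μ / 2)) ≤ Real.exp (-(μ * L * t) / 2) := by
    apply Real.exp_le_exp.mpr
    have hLt : μ * L * t ≤ μ := by
      have h1 : L * t ≤ r * t := mul_le_mul_of_nonneg_right hLr ht.le
      nlinarith
    linarith
  rw [hnum, le_div_iff₀ hSpos]
  calc t * Real.exp (-(μ / 2)) * S = Real.exp (-(μ / 2)) * (2 * x) := by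
        rw [hxdef]; ring
    _ ≤ Real.exp (-(μ * L * t) / 2) * (2 * x) :=
        mul_le_mul_of_nonneg_right hfac (by positivity)
    _ ≤ Real.exp (-(μ * L * t) / 2) * (Real.exp x - Real.exp (-x)) :=
        mul_le_mul_of_nonneg_left hsinh (Real.exp_pos _).le

private lemma aux_integrable_exp (n : ℕ) {c : ℝ} (hc : 0 < c) :
    Integrable (fun x : EuclideanSpace ℝ (Fin n) => Real.exp (-(c * ‖x‖))) := by
  have hfin : (Module.finrank ℝ (EuclideanSpace ℝ (Fin n)) : ℝ) < ((n + 1 : ℕ) : ℝ) := by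
    rw [finrank_euclideanSpace_fin]; push_cast; linarith
  set m : ℕ := n + 1 with hm
  set A : ℝ := max 1 ((m : ℝ) / c) with hA
  have hA1 : 1 ≤ A := le_max_left _ _
  have hAc : (m : ℝ) / c ≤ A := le_max_right _ _
  have hm0 : (0:ℝ) < (m : ℝ) := by positivity
  have hmc : (m : ℝ) ≤ A * c := by rwa [div_le_iff₀ hc] at hAc
  have hbound : ∀ x : EuclideanSpace ℝ (Fin n),
      ‖Real.exp (-(c * ‖x‖))‖ ≤ A ^ m * (1 + ‖x‖) ^ (-(m : ℝ)) := by
    intro x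
    set s := ‖x‖ with hs
    have hs0 : 0 ≤ s := norm_nonneg _
    have h1 : 1 + s ≤ A * (1 + c * s / m) := by
      have heq : A * (1 + c * s / m) = A * (m + c * s) / m := by field_simp
      rw [heq, le_div_iff₀ hm0]
      nlinarith [mul_nonneg (sub_nonneg.mpr hA1) hm0.le,
        mul_nonneg (sub_nonneg.mpr hmc) hs0]
    have h2 : 1 + c * s / m ≤ Real.exp (c * s / m) := by
      linarith [Real.add_one_le_exp (c * s / m)]
    have h3 : (1 + s) ^ m ≤ A ^ m * Real.exp (c * s) := by
      calc (1 + s) ^ m ≤ (A * (1 + c * s / m)) ^ m :=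
            pow_le_pow_left₀ (by positivity) h1 m
        _ = A ^ m * (1 + c * s / m) ^ m := mul_pow _ _ _
        _ ≤ A ^ m * (Real.exp (c * s / m)) ^ m := by
            apply mul_le_mul_of_nonneg_left _ (by positivity)
            exact pow_le_pow_left₀ (by positivity) h2 m
        _ = A ^ m * Real.exp (c * s) := by
            rw [← Real.exp_nat_mul]
            congr 1
            field_simp
    have hp1 : (0:ℝ) < (1 + s) ^ m := by positivity
    have hp2 : (0:ℝ) < Real.exp (c * s) := Real.exp_pos _
    rw [Real.norm_eq_abs, abs_of_pos (Real.exp_pos _), Real.rpow_neg (by positivity),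
      Real.rpow_natCast, Real.exp_neg, ← div_eq_mul_inv, inv_eq_one_div,
      div_le_div_iff₀ hp2 hp1, one_mul]
    linarith [h3]
  apply Integrable.mono' ((integrable_one_add_norm hfin).const_mul (A ^ m))
  · exact (Real.continuous_exp.comp ((continuous_const.mul continuous_norm).neg)).aestronglyMeasurable
  · exact Filter.Eventually.of_forall hbound

private lemma aux_meas (n : ℕ) (μ t : ℝ) :
    Measurable (fun ξ : EuclideanSpace ℝ (Fin n) =>
      (Real.exp ((-(μ * Real.log (1 + ‖ξ‖)) + Real.sqrt (μ ^ 2 * Real.log (1 + ‖ξ‖) ^ 2 - 4 * ‖ξ‖ ^ 2)) / 2 * t)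
        - Real.exp ((-(μ * Real.log (1 + ‖ξ‖)) - Real.sqrt (μ ^ 2 * Real.log (1 + ‖ξ‖) ^ 2 - 4 * ‖ξ‖ ^ 2)) / 2 * t))
        / Real.sqrt (μ ^ 2 * Real.log (1 + ‖ξ‖) ^ 2 - 4 * ‖ξ‖ ^ 2)) := by
  have hnorm : Measurable (fun ξ : EuclideanSpace ℝ (Fin n) => ‖ξ‖) := measurable_norm
  have hlog : Measurable (fun ξ : EuclideanSpace ℝ (Fin n) => Real.log (1 + ‖ξ‖)) :=
    Real.measurable_log.comp (measurable_const.add hnorm)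
  have hh : Measurable (fun ξ : EuclideanSpace ℝ (Fin n) =>
      μ ^ 2 * Real.log (1 + ‖ξ‖) ^ 2 - 4 * ‖ξ‖ ^ 2) :=
    ((measurable_const.mul (hlog.pow_const 2)).sub (measurable_const.mul (hnorm.pow_const 2)))
  have hsqrt : Measurable (fun ξ : EuclideanSpace ℝ (Fin n) =>
      Real.sqrt (μ ^ 2 * Real.log (1 + ‖ξ‖) ^ 2 - 4 * ‖ξ‖ ^ 2)) :=
    Real.continuous_sqrt.measurable.comp hh
  have e1 : Measurable (fun ξ : EuclideanSpace ℝ (Fin n) =>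
      Real.exp ((-(μ * Real.log (1 + ‖ξ‖)) + Real.sqrt (μ ^ 2 * Real.log (1 + ‖ξ‖) ^ 2 - 4 * ‖ξ‖ ^ 2)) / 2 * t)) :=
    Real.measurable_exp.comp ((((measurable_const.mul hlog).neg.add hsqrt).div_const 2).mul_const t)
  have e2 : Measurable (fun ξ : EuclideanSpace ℝ (Fin n) =>
      Real.exp ((-(μ * Real.log (1 + ‖ξ‖)) - Real.sqrt (μ ^ 2 * Real.log (1 + ‖ξ‖) ^ 2 - 4 * ‖ξ‖ ^ 2)) / 2 * t)) :=
    Real.measurable_exp.comp ((((measurable_const.mul hlog).neg.sub hsqrt).div_const 2).mul_const t)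
  exact (e1.sub e2).div hsqrt

/-- Estimates (4.3) and (4.5) (`μ > 2`): the profile
`ν(t,ξ) = (e^{λ₊t} - e^{λ₋t})/√(h(r))` (with `r = |ξ|`) satisfies
`C₁ t^{2-n} ≤ ∫_{|ξ| ≤ δ₁} |ν(t,ξ)|² dξ ≤ C₂ t^{2-n}` for large `t`. -/
theorem stmt18 (n : ℕ) (hn : 1 ≤ n) (μ δ δ₁ : ℝ) (hμ : 2 < μ) (hδ : 0 < δ)
    (hroot : μ * Real.log (1 + δ) = 2 * δ)
    (hδ₁ : 0 < δ₁) (hδ₁le : δ₁ ≤ min (μ / 2 - 1) δ) :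
    let h : ℝ → ℝ := fun r => μ ^ 2 * Real.log (1 + r) ^ 2 - 4 * r ^ 2
    let lp : ℝ → ℝ := fun r => (-(μ * Real.log (1 + r)) + Real.sqrt (h r)) / 2
    let lm : ℝ → ℝ := fun r => (-(μ * Real.log (1 + r)) - Real.sqrt (h r)) / 2
    let ν : ℝ → EuclideanSpace ℝ (Fin n) → ℝ := fun t ξ =>
      (Real.exp (lp ‖ξ‖ * t) - Real.exp (lm ‖ξ‖ * t)) / Real.sqrt (h ‖ξ‖)
    ∃ C₁ C₂ t₀ : ℝ, 0 < C₁ ∧ 0 < C₂ ∧ 0 < t₀ ∧ ∀ t : ℝ, t₀ ≤ t →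
      C₁ * t ^ ((2 : ℝ) - n) ≤
        (∫ ξ in Metric.closedBall (0 : EuclideanSpace ℝ (Fin n)) δ₁, |ν t ξ| ^ 2) ∧
      (∫ ξ in Metric.closedBall (0 : EuclideanSpace ℝ (Fin n)) δ₁, |ν t ξ| ^ 2) ≤
        C₂ * t ^ ((2 : ℝ) - n) := by
  intro h lp lm ν
  have hνeq : ν = fun (t : ℝ) (ξ : EuclideanSpace ℝ (Fin n)) => nuF μ ‖ξ‖ t := rfl
  rw [hνeq]
  have hδ₁m : δ₁ ≤ μ / 2 - 1 := le_trans hδ₁le (min_le_left _ _)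
  have hμ0 : (0:ℝ) < μ := by linarith
  set v := volume (Metric.ball (0 : EuclideanSpace ℝ (Fin n)) 1) with hvdef
  have hv0 : v ≠ 0 := (Metric.measure_ball_pos _ _ one_pos).ne'
  have hvt : v ≠ ⊤ := measure_ball_lt_top.ne
  have hvR : 0 < v.toReal := ENNReal.toReal_pos hv0 hvt
  have hhalf : (1/2 : ℝ) ^ n < 1 := pow_lt_one₀ (by norm_num) (by norm_num) (by omega)
  have hCint : 0 ≤ ∫ x : EuclideanSpace ℝ (Fin n), Real.exp (-(2/μ * ‖x‖)) :=
    integral_nonneg fun x => (Real.exp_pos _).le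
  refine ⟨Real.exp (-μ) * ((1 - (1/2:ℝ) ^ n) * v.toReal),
    (∫ x : EuclideanSpace ℝ (Fin n), Real.exp (-(2/μ * ‖x‖))) + 1,
    max (1/δ₁) 1, ?_, ?_, ?_, ?_⟩
  · exact mul_pos (Real.exp_pos _) (mul_pos (by linarith) hvR)
  · linarith
  · exact lt_of_lt_of_le one_pos (le_max_right _ _)
  intro t ht
  have ht1 : (1:ℝ) ≤ t := le_trans (le_max_right _ _) ht
  have ht0 : (0:ℝ) < t := lt_of_lt_of_le one_pos ht1
  have htδ : 1/t ≤ δ₁ := by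
    have h1 : 1/δ₁ ≤ t := le_trans (le_max_left _ _) ht
    calc 1/t ≤ 1/(1/δ₁) := one_div_le_one_div_of_le (by positivity) h1
      _ = δ₁ := one_div_one_div δ₁
  have hrp : t ^ ((2:ℝ) - n) = t ^ 2 * ((t ^ n : ℝ))⁻¹ := by
    rw [Real.rpow_sub ht0, Real.rpow_natCast, show (2:ℝ) = ((2:ℕ):ℝ) by norm_num,
      Real.rpow_natCast, div_eq_mul_inv]
  have hmeas : Measurable (fun ξ : EuclideanSpace ℝ (Fin n) => nuF μ ‖ξ‖ t) := aux_meas n μ t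
  -- integrability of the integrand on the closed ball
  have hIntf : IntegrableOn (fun ξ : EuclideanSpace ℝ (Fin n) => |nuF μ ‖ξ‖ t| ^ 2)
      (Metric.closedBall (0 : EuclideanSpace ℝ (Fin n)) δ₁) volume := by
    refine Measure.integrableOn_of_bounded (M := t ^ 2) measure_closedBall_lt_top.ne
      ((hmeas.abs.pow_const 2)).aestronglyMeasurable ?_
    · rw [ae_restrict_iff' measurableSet_closedBall]
      apply Filter.Eventually.of_forall
      intro ξ hξ
      rw [mem_closedBall_zero_iff] at hξ
      have hnn := aux_nu_nonneg μ ‖ξ‖ t ht0.le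
      have hub := aux_nu_le hμ hδ₁m (norm_nonneg ξ) hξ ht0.le
      have hexp1 : Real.exp (-(‖ξ‖ * t) / μ) ≤ 1 := by
        apply Real.exp_le_one_iff.mpr
        apply div_nonpos_of_nonpos_of_nonneg _ hμ0.le
        simp [mul_nonneg (norm_nonneg ξ) ht0.le]
      have habs : |nuF μ ‖ξ‖ t| ≤ t := by
        rw [abs_of_nonneg hnn]
        calc nuF μ ‖ξ‖ t ≤ t * Real.exp (-(‖ξ‖ * t) / μ) := hub
          _ ≤ t * 1 := mul_le_mul_of_nonneg_left hexp1 ht0.le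
          _ = t := mul_one t
      rw [Real.norm_eq_abs, abs_of_nonneg (by positivity)]
      exact pow_le_pow_left₀ (abs_nonneg _) habs 2
  constructor
  · -- lower bound
    set A := Metric.closedBall (0 : EuclideanSpace ℝ (Fin n)) (1/t) \
      Metric.closedBall (0 : EuclideanSpace ℝ (Fin n)) (1/(2*t)) with hAdef
    have h12 : 1/(2*t) ≤ 1/t := one_div_le_one_div_of_le ht0 (by linarith)
    have hsub : A ⊆ Metric.closedBall (0 : EuclideanSpace ℝ (Fin n)) δ₁ :=
      Set.diff_subset.trans (Metric.closedBall_subset_closedBall htδ)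
    have hvolA : volume A = ENNReal.ofReal ((1/t)^n - (1/(2*t))^n) * v := by
      rw [hAdef, measure_diff (Metric.closedBall_subset_closedBall h12)
          measurableSet_closedBall.nullMeasurableSet measure_closedBall_lt_top.ne,
        Measure.addHaar_closedBall _ _ (by positivity : (0:ℝ) ≤ 1/t),
        Measure.addHaar_closedBall _ _ (by positivity : (0:ℝ) ≤ 1/(2*t)),
        finrank_euclideanSpace_fin, ← ENNReal.sub_mul (fun _ _ => hvt),
        ← ENNReal.ofReal_sub _ (by positivity)]
    have hsubpos : 0 ≤ (1/t)^n - (1/(2*t))^n :=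
      sub_nonneg.mpr (pow_le_pow_left₀ (by positivity) h12 n)
    have hAtoReal : (volume A).toReal = ((1/t)^n - (1/(2*t))^n) * v.toReal := by
      rw [hvolA, ENNReal.toReal_mul, ENNReal.toReal_ofReal hsubpos]
    have hdiff : (1/t)^n - (1/(2*t))^n = (1 - (1/2:ℝ)^n) * ((t:ℝ)^n)⁻¹ := by
      rw [show (1/(2*t) : ℝ) = (1/2)*(1/t) by ring, mul_pow, one_div t, inv_pow]
      ring
    have hptge : ∀ ξ ∈ A, Real.exp (-μ) * t^2 ≤ |nuF μ ‖ξ‖ t| ^ 2 := by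
      intro ξ hξ
      obtain ⟨hξ1, hξ2⟩ := hξ
      rw [mem_closedBall_zero_iff] at hξ1
      rw [Metric.mem_closedBall, dist_zero_right, not_le] at hξ2
      have h0 : 0 < ‖ξ‖ := lt_trans (by positivity) hξ2
      have hrt : ‖ξ‖ * t ≤ 1 := by
        rw [← le_div_iff₀ ht0]; exact hξ1
      have hge := aux_nu_ge hμ hδ₁m h0 (le_trans hξ1 htδ) ht0 hrt
      rw [abs_of_nonneg (aux_nu_nonneg μ ‖ξ‖ t ht0.le)]
      have hsq : (Real.exp (-(μ/2)))^2 = Real.exp (-μ) := by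
        rw [← Real.exp_nat_mul]; congr 1; push_cast; ring
      calc Real.exp (-μ) * t^2 = (t * Real.exp (-(μ/2)))^2 := by
            rw [mul_pow, hsq]; ring
        _ ≤ (nuF μ ‖ξ‖ t)^2 := pow_le_pow_left₀ (by positivity) hge 2
    have hconst : IntegrableOn (fun _ : EuclideanSpace ℝ (Fin n) => Real.exp (-μ) * t^2) A volume :=
      (integrableOn_const_iff).mpr (Or.inr (lt_of_le_of_lt (measure_mono Set.diff_subset)
        measure_closedBall_lt_top))
    calc Real.exp (-μ) * ((1 - (1/2:ℝ) ^ n) * v.toReal) * t ^ ((2:ℝ) - n)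
        = ∫ _ in A, Real.exp (-μ) * t^2 := by
          rw [setIntegral_const, smul_eq_mul, measureReal_def, hAtoReal, hdiff, hrp]; ring
      _ ≤ ∫ ξ in A, |nuF μ ‖ξ‖ t| ^ 2 :=
          setIntegral_mono_on hconst (hIntf.mono_set hsub)
            (measurableSet_closedBall.diff measurableSet_closedBall) hptge
      _ ≤ ∫ ξ in Metric.closedBall (0 : EuclideanSpace ℝ (Fin n)) δ₁, |nuF μ ‖ξ‖ t| ^ 2 :=
          setIntegral_mono_set hIntf
            (Filter.Eventually.of_forall fun ξ => by positivity)
            (HasSubset.Subset.eventuallyLE hsub)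
  · -- upper bound
    have hc : (0:ℝ) < 2*t/μ := by positivity
    have hIntg : Integrable (fun x : EuclideanSpace ℝ (Fin n) =>
        t^2 * Real.exp (-(2*t/μ * ‖x‖))) := (aux_integrable_exp n hc).const_mul _
    have hptle : ∀ ξ ∈ Metric.closedBall (0 : EuclideanSpace ℝ (Fin n)) δ₁,
        |nuF μ ‖ξ‖ t| ^ 2 ≤ t^2 * Real.exp (-(2*t/μ * ‖ξ‖)) := by
      intro ξ hξ
      rw [mem_closedBall_zero_iff] at hξ
      have hnn := aux_nu_nonneg μ ‖ξ‖ t ht0.le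
      have hub := aux_nu_le hμ hδ₁m (norm_nonneg ξ) hξ ht0.le
      rw [abs_of_nonneg hnn]
      calc (nuF μ ‖ξ‖ t)^2 ≤ (t * Real.exp (-(‖ξ‖ * t)/μ))^2 := pow_le_pow_left₀ hnn hub 2
        _ = t^2 * Real.exp (-(2*t/μ * ‖ξ‖)) := by
            rw [mul_pow, ← Real.exp_nat_mul]
            congr 2
            push_cast; ring
    calc ∫ ξ in Metric.closedBall (0 : EuclideanSpace ℝ (Fin n)) δ₁, |nuF μ ‖ξ‖ t| ^ 2
        ≤ ∫ ξ in Metric.closedBall (0 : EuclideanSpace ℝ (Fin n)) δ₁,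
            t^2 * Real.exp (-(2*t/μ * ‖ξ‖)) :=
          setIntegral_mono_on hIntf hIntg.integrableOn measurableSet_closedBall hptle
      _ ≤ ∫ ξ : EuclideanSpace ℝ (Fin n), t^2 * Real.exp (-(2*t/μ * ‖ξ‖)) :=
          setIntegral_le_integral hIntg (Filter.Eventually.of_forall fun x => by positivity)
      _ = t^2 * ∫ ξ : EuclideanSpace ℝ (Fin n), Real.exp (-(2*t/μ * ‖ξ‖)) :=
          integral_const_mul _ _
      _ = t^2 * (((t:ℝ)^n)⁻¹ * ∫ x : EuclideanSpace ℝ (Fin n), Real.exp (-(2/μ * ‖x‖))) := by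
          congr 1
          have hfun : (fun x : EuclideanSpace ℝ (Fin n) => Real.exp (-(2*t/μ * ‖x‖)))
              = fun x => Real.exp (-(2/μ * ‖t • x‖)) := by
            funext x
            rw [norm_smul, Real.norm_eq_abs, abs_of_pos ht0]
            congr 1; ring
          rw [hfun, Measure.integral_comp_smul volume
              (fun x : EuclideanSpace ℝ (Fin n) => Real.exp (-(2/μ * ‖x‖))) t,
            finrank_euclideanSpace_fin, smul_eq_mul,
            abs_of_pos (by positivity : (0:ℝ) < ((t:ℝ)^n)⁻¹)]
      _ ≤ ((∫ x : EuclideanSpace ℝ (Fin n), Real.exp (-(2/μ * ‖x‖))) + 1) * t ^ ((2:ℝ) - n) := by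
          rw [hrp]
          have hpos : (0:ℝ) < t^2 * ((t:ℝ)^n)⁻¹ := by positivity
          nlinarith [hpos, hCint]
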